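/- Let Z be an n×K real matrix all of whose entries lie in {0,1} and such that every row of Z contains exactly m ones. Suppose Z = U D Rᵀ where U is n×r with orthonormal columns (UᵀU = I_r), R is K×r with orthonormal columns (RᵀR = I_r), and D is an r×r diagonal matrix with diagonal entries d₁ ≥ … ≥ d_r > 0 satisfying d₁ ≤ κ₀ d_r for some κ₀ ≥ 1. Then for every row index j ∈ {1,…,n}, ‖e_jᵀ U‖_{ℓ₂} ≤ √m / d_r ≤ κ₀ √(r/n). (Incoherence of the singular vectors Ū of the global membership matrix.) -/
import Mathlib


/-- **Incoherence of the singular vectors `Ū` of the global membership matrix**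
(Lemma 4 of the paper): every row of `U` satisfies `‖e_jᵀU‖ ≤ √m / d_r ≤ κ₀ √(r/n)`. -/
theorem incoherence_of_U
    (n K r m : ℕ)
    (Z : Matrix (Fin n) (Fin K) ℝ)
    (hZ01 : ∀ i k, Z i k = 0 ∨ Z i k = 1)
    (hZrow : ∀ i, ∑ k, Z i k = (m : ℝ))
    (U : Matrix (Fin n) (Fin r) ℝ) (hU : U.transpose * U = 1)
    (R : Matrix (Fin K) (Fin r) ℝ) (hR : R.transpose * R = 1)
    (d : Fin r → ℝ)
    (dmin dmax : ℝ)
    (hdmin : IsLeast (Set.range d) dmin)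
    (hdmax : IsGreatest (Set.range d) dmax)
    (hdpos : 0 < dmin)
    (κ₀ : ℝ) (hκ : 1 ≤ κ₀) (hcond : dmax ≤ κ₀ * dmin)
    (hZ : Z = U * Matrix.diagonal d * R.transpose) :
    (∀ j : Fin n, Real.sqrt (∑ a, (U j a) ^ 2) ≤ Real.sqrt m / dmin) ∧
      Real.sqrt m / dmin ≤ κ₀ * Real.sqrt ((r : ℝ) / n) := by
  have hdmin_le : ∀ a, dmin ≤ d a := fun a => hdmin.2 ⟨a, rfl⟩
  have hdmax_ge : ∀ a, d a ≤ dmax := fun a => hdmax.2 ⟨a, rfl⟩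
  have hdpos' : ∀ a, 0 < d a := fun a => lt_of_lt_of_le hdpos (hdmin_le a)
  obtain ⟨a₀, ha₀⟩ := hdmin.1
  have hdmaxpos : 0 < dmax := lt_of_lt_of_le (hdpos' a₀) (hdmax_ge a₀)
  have hn : 0 < n := by
    by_contra h
    push_neg at h
    have hn0 : n = 0 := Nat.le_zero.mp h
    subst hn0
    have := congrFun (congrFun hU a₀) a₀
    simp [Matrix.mul_apply, Matrix.one_apply] at this
  have hn' : (0 : ℝ) < n := by exact_mod_cast hn
  -- Z Zᵀ = U D² Uᵀ
  have hZZT : Z * Z.transpose =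
      U * Matrix.diagonal (fun a => d a * d a) * U.transpose := by
    rw [hZ, Matrix.transpose_mul, Matrix.transpose_mul, Matrix.transpose_transpose,
      Matrix.diagonal_transpose, ← Matrix.diagonal_mul_diagonal]
    simp only [Matrix.mul_assoc]
    rw [← Matrix.mul_assoc R.transpose R, hR, Matrix.one_mul]
  -- diagonal entries of Z Zᵀ equal m
  have hrowm : ∀ j, (Z * Z.transpose) j j = (m : ℝ) := by
    intro j
    have h1 : (Z * Z.transpose) j j = ∑ k, Z j k * Z j k := by
      simp [Matrix.mul_apply]
    rw [h1]
    have h2 : ∀ k, Z j k * Z j k = Z j k := by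
      intro k; rcases hZ01 j k with h | h <;> simp [h]
    rw [Finset.sum_congr rfl fun k _ => h2 k, hZrow j]
  -- diagonal entries of U D² Uᵀ
  have hentry : ∀ j, ∑ a, d a * d a * U j a ^ 2 = (m : ℝ) := by
    intro j
    have h1 : (Z * Z.transpose) j j = ∑ a, U j a * (d a * d a) * U j a := by
      rw [hZZT, Matrix.mul_apply]
      simp only [Matrix.mul_diagonal, Matrix.transpose_apply]
    rw [← hrowm j, h1]
    exact Finset.sum_congr rfl fun a _ => by ring
  -- trace identity : ∑ d² = n m
  have htr : (∑ a, d a * d a) = (n : ℝ) * m := by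
    calc (∑ a, d a * d a)
        = Matrix.trace (Matrix.diagonal (fun a => d a * d a)) := by
          simp [Matrix.trace_diagonal]
      _ = Matrix.trace ((U.transpose * U) * Matrix.diagonal (fun a => d a * d a)) := by
          rw [hU, Matrix.one_mul]
      _ = Matrix.trace (U.transpose * (U * Matrix.diagonal (fun a => d a * d a))) := by
          rw [Matrix.mul_assoc]
      _ = Matrix.trace ((U * Matrix.diagonal (fun a => d a * d a)) * U.transpose) :=
          (Matrix.trace_mul_comm _ _).symm
      _ = Matrix.trace (Z * Z.transpose) := by rw [hZZT, Matrix.mul_assoc]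
      _ = ∑ j, (Z * Z.transpose) j j := rfl
      _ = ∑ _j : Fin n, (m : ℝ) := Finset.sum_congr rfl fun j _ => hrowm j
      _ = (n : ℝ) * m := by simp [mul_comm]
  constructor
  · intro j
    have hsum : ∑ a, (U j a) ^ 2 ≤ (m : ℝ) / dmin ^ 2 := by
      rw [le_div_iff₀ (by positivity : (0:ℝ) < dmin ^ 2)]
      calc (∑ a, (U j a) ^ 2) * dmin ^ 2 = ∑ a, dmin ^ 2 * U j a ^ 2 := by
            rw [Finset.sum_mul]; exact Finset.sum_congr rfl fun a _ => by ring
        _ ≤ ∑ a, d a * d a * U j a ^ 2 := by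
            apply Finset.sum_le_sum
            intro a _
            have : dmin ^ 2 ≤ d a * d a := by nlinarith [hdmin_le a]
            nlinarith [sq_nonneg (U j a)]
        _ = (m : ℝ) := hentry j
    calc Real.sqrt (∑ a, (U j a) ^ 2) ≤ Real.sqrt ((m : ℝ) / dmin ^ 2) :=
          Real.sqrt_le_sqrt hsum
      _ = Real.sqrt m / dmin := by
          rw [Real.sqrt_div (by positivity), Real.sqrt_sq hdpos.le]
  · have hmn : (n : ℝ) * m ≤ κ₀ ^ 2 * dmin ^ 2 * r := by
      calc (n : ℝ) * m = ∑ a, d a * d a := htr.symm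
        _ ≤ ∑ _a : Fin r, dmax * dmax := by
            apply Finset.sum_le_sum
            intro a _
            nlinarith [hdmax_ge a, hdpos' a]
        _ = (r : ℝ) * (dmax * dmax) := by simp [mul_comm]
        _ ≤ (r : ℝ) * ((κ₀ * dmin) * (κ₀ * dmin)) := by
            have h := mul_le_mul hcond hcond hdmaxpos.le (by positivity : (0:ℝ) ≤ κ₀ * dmin)
            have hr0 : (0:ℝ) ≤ (r:ℝ) := Nat.cast_nonneg r
            nlinarith
        _ = κ₀ ^ 2 * dmin ^ 2 * r := by ring
    have h2 : (m : ℝ) / dmin ^ 2 ≤ κ₀ ^ 2 * ((r : ℝ) / n) := by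
      rw [div_le_iff₀ (by positivity : (0:ℝ) < dmin ^ 2),
        show κ₀ ^ 2 * ((r : ℝ) / n) * dmin ^ 2 = κ₀ ^ 2 * dmin ^ 2 * r / n by ring,
        le_div_iff₀ hn']
      linarith [hmn, mul_comm (m : ℝ) (n : ℝ)]
    calc Real.sqrt m / dmin = Real.sqrt ((m : ℝ) / dmin ^ 2) := by
          rw [Real.sqrt_div (by positivity), Real.sqrt_sq hdpos.le]
      _ ≤ Real.sqrt (κ₀ ^ 2 * ((r : ℝ) / n)) := Real.sqrt_le_sqrt h2
      _ = κ₀ * Real.sqrt ((r : ℝ) / n) := by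
          rw [Real.sqrt_mul (sq_nonneg _), Real.sqrt_sq (by linarith : (0:ℝ) ≤ κ₀)]
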